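/- For every nilpotent n×n matrix A over a field k and every integer m ≥ 0, one has (-1)^m·(∂_{ji} s_{m+1})(A)_{ij} = A^m = (∂_{ji} h_{m+1})(A)_{ij}, where the subscript ij indicates the matrix formed from these partial derivatives. -/

import Mathlib

open MvPolynomial

/-- The generic `n × n` matrix whose `(i,j)` entry is the coordinate function `x_{ij}`. -/
noncomputable def genMat (k : Type*) [CommRing k] (n : ℕ) :
    Matrix (Fin n) (Fin n) (MvPolynomial (Fin n × Fin n) k) :=
  Matrix.of fun i j => X (i, j)

/-- `s_m`, the `m`-th elementary symmetric function of the eigenvalues, as a polynomial in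
the matrix entries. -/
noncomputable def sPoly (k : Type*) [CommRing k] (n : ℕ) (m : ℕ) :
    MvPolynomial (Fin n × Fin n) k :=
  if m ≤ n then (-1) ^ m * (genMat k n).charpoly.coeff (n - m) else 0

/-- `h_m = tr(S^m)`, the `m`-th complete homogeneous symmetric function of the eigenvalues,
as a polynomial in the matrix entries; it is determined by `h_0 = 1` and the universal
identity `∑_{k=0}^m (-1)^k s_k h_{m-k} = 0` (for `m ≥ 1`). -/
noncomputable def hPoly (k : Type*) [CommRing k] (n : ℕ) : ℕ → MvPolynomial (Fin n × Fin n) k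
  | 0 => 1
  | (m + 1) => ∑ j ∈ Finset.range (m + 1), (-1) ^ j * sPoly k n (j + 1) * hPoly k n (m - j)
  termination_by m => m
  decreasing_by omega

section Aux

open Polynomial Matrix

variable {R A : Type*} [CommSemiring R] [CommRing A] [Algebra R A]

/-- Leibniz rule for a derivation applied to a finite product. -/
theorem Derivation.map_finset_prod' (d : Derivation R A A) {ι : Type*} [DecidableEq ι]
    (s : Finset ι) (f : ι → A) :
    d (∏ i ∈ s, f i) = ∑ i ∈ s, (∏ j ∈ s.erase i, f j) * d (f i) := by
  classical
  induction s using Finset.induction_on with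
  | empty => simp
  | insert a s ha ih =>
    rw [Finset.prod_insert ha, d.leibniz, smul_eq_mul, smul_eq_mul, ih,
      Finset.sum_insert ha, Finset.erase_insert ha, Finset.mul_sum, add_comm]
    congr 1
    apply Finset.sum_congr rfl
    intro i hi
    rw [Finset.erase_insert_of_ne]
    · rw [Finset.prod_insert (fun h => ha (Finset.mem_of_mem_erase h)), mul_assoc]
    · exact fun h => ha (h ▸ hi)

/-- Jacobi's formula for a derivation. -/
theorem Derivation.map_det' {n : Type*} [DecidableEq n] [Fintype n]
    (d : Derivation R A A) (M : Matrix n n A) :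
    d M.det = ∑ c, ∑ r, M.adjugate c r * d (M r c) := by
  classical
  have key : ∀ c : n, (∑ r, M.adjugate c r * d (M r c))
      = (M.updateCol c (fun r => d (M r c))).det := by
    intro c
    rw [← cramer_apply, cramer_eq_adjugate_mulVec]
    simp [Matrix.mulVec, dotProduct]
  simp_rw [key, det_apply, map_sum, Units.smul_def, d.map_smul_of_tower,
    Derivation.map_finset_prod', Finset.smul_sum]
  rw [Finset.sum_comm]
  apply Finset.sum_congr rfl
  intro c _
  apply Finset.sum_congr rfl
  intro σ _
  congr 1
  rw [← Finset.mul_prod_erase Finset.univ _ (Finset.mem_univ c)]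
  rw [Matrix.updateCol_apply, if_pos rfl, mul_comm]
  congr 1
  apply Finset.prod_congr rfl
  intro j hj
  rw [Matrix.updateCol_apply, if_neg (Finset.ne_of_mem_erase hj)]

/-- Coefficient-wise application of a derivation to a polynomial, as a derivation. -/
noncomputable def Derivation.liftPoly (d : Derivation R A A) :
    Derivation R (Polynomial A) (Polynomial A) where
  toFun f := ⟨AddMonoidAlgebra.ofCoeff (Finsupp.mapRange d (map_zero d) f.toFinsupp.coeff)⟩
  map_add' f g := by
    apply Polynomial.ext
    intro i
    show d ((f + g).coeff i) = (⟨AddMonoidAlgebra.ofCoeff (Finsupp.mapRange d (map_zero d) f.toFinsupp.coeff)⟩ +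
      ⟨AddMonoidAlgebra.ofCoeff (Finsupp.mapRange d (map_zero d) g.toFinsupp.coeff)⟩ : Polynomial A).coeff i
    simp only [Polynomial.coeff_add, Finsupp.add_apply, Finsupp.mapRange_apply, map_add]
    rfl
  map_smul' r f := by
    apply Polynomial.ext
    intro i
    show d ((r • f).coeff i) = (r • (⟨AddMonoidAlgebra.ofCoeff (Finsupp.mapRange d (map_zero d) f.toFinsupp.coeff)⟩ :
      Polynomial A)).coeff i
    simp only [Polynomial.coeff_smul, Finsupp.smul_apply, Finsupp.mapRange_apply,
      d.map_smul_of_tower]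
    rfl
  map_one_eq_zero' := by
    apply Polynomial.ext
    intro i
    show d ((1 : Polynomial A).coeff i) = (0 : Polynomial A).coeff i
    rcases eq_or_ne i 0 with h | h <;> simp [Polynomial.coeff_one, h]
  leibniz' f g := by
    apply Polynomial.ext
    intro i
    show d ((f * g).coeff i) = (f • (⟨AddMonoidAlgebra.ofCoeff (Finsupp.mapRange d (map_zero d) g.toFinsupp.coeff)⟩ : Polynomial A)
      + g • (⟨AddMonoidAlgebra.ofCoeff (Finsupp.mapRange d (map_zero d) f.toFinsupp.coeff)⟩ : Polynomial A)).coeff i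
    rw [Polynomial.coeff_mul, map_sum, Polynomial.coeff_add, smul_eq_mul, smul_eq_mul,
      Polynomial.coeff_mul, Polynomial.coeff_mul, ← Finset.sum_add_distrib]
    have h1 : ∀ p ∈ Finset.HasAntidiagonal.antidiagonal i, d (f.coeff p.1 * g.coeff p.2) =
        f.coeff p.1 * d (g.coeff p.2) + g.coeff p.2 * d (f.coeff p.1) := by
      intro p _
      rw [d.leibniz, smul_eq_mul, smul_eq_mul]
    rw [Finset.sum_congr rfl h1, Finset.sum_add_distrib]
    have h2 : ∑ p ∈ Finset.HasAntidiagonal.antidiagonal i, g.coeff p.2 * d (f.coeff p.1)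
        = ∑ p ∈ Finset.HasAntidiagonal.antidiagonal i, g.coeff p.1 * d (f.coeff p.2) := by
      conv_lhs => rw [← Finset.HasAntidiagonal.map_swap_antidiagonal]
      rw [Finset.sum_map]
      rfl
    rw [h2, ← Finset.sum_add_distrib]
    exact Finset.sum_congr rfl fun p _ => rfl

@[simp] theorem Derivation.liftPoly_coeff (d : Derivation R A A) (f : Polynomial A) (i : ℕ) :
    (d.liftPoly f).coeff i = d (f.coeff i) := rfl

theorem Derivation.liftPoly_charmatrix {n : Type*} [DecidableEq n] [Fintype n]
    (d : Derivation R A A) (M : Matrix n n A) (r c : n) :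
    d.liftPoly (charmatrix M r c) = -Polynomial.C (d (M r c)) := by
  apply Polynomial.ext
  intro t
  rw [Derivation.liftPoly_coeff, charmatrix_apply, Polynomial.coeff_sub, map_sub,
    Polynomial.coeff_neg, Polynomial.coeff_C]
  have hdiag : d (((Matrix.diagonal fun _ : n => (Polynomial.X : Polynomial A)) r c).coeff t)
      = 0 := by
    rw [Matrix.diagonal_apply]
    split_ifs with h
    · rw [Polynomial.coeff_X]
      split_ifs with h2
      · exact d.map_one_eq_zero
      · exact map_zero d
    · simp
  rw [hdiag, zero_sub]
  congr 1
  rw [Polynomial.coeff_C]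
  split_ifs with h
  · rfl
  · exact map_zero d

/-- Derivative of a coefficient of the characteristic polynomial. -/
theorem deriv_charpoly_coeff {n : Type*} [DecidableEq n] [Fintype n]
    (d : Derivation R A A) (M : Matrix n n A) (t : ℕ) :
    d (M.charpoly.coeff t)
      = -∑ c, ∑ r, ((charmatrix M).adjugate c r).coeff t * d (M r c) := by
  have h : d (M.charpoly.coeff t) = (d.liftPoly M.charpoly).coeff t := rfl
  rw [h, Matrix.charpoly, Derivation.map_det']
  simp_rw [Derivation.liftPoly_charmatrix, mul_neg, Polynomial.finset_sum_coeff,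
    Polynomial.coeff_neg, Polynomial.coeff_mul_C, Finset.sum_neg_distrib]

theorem adjugate_charmatrix_coeff {S : Type*} [CommRing S] [Nontrivial S] {N : ℕ}
    (M : Matrix (Fin N) (Fin N) S) (m : ℕ) (i j : Fin N) :
    ((charmatrix M).adjugate i j).coeff m =
      (∑ t ∈ Finset.Ico (m + 1) (N + 1), M.charpoly.coeff t • M ^ (t - 1 - m)) i j := by
  classical
  set q : Polynomial (Matrix (Fin N) (Fin N) S) :=
    ∑ t ∈ Finset.range (N + 1), ∑ a ∈ Finset.range t,
      Polynomial.C (M.charpoly.coeff t • M ^ (t - 1 - a)) * Polynomial.X ^ a with hqdef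
  have hdeg : M.charpoly.natDegree < N + 1 := by
    rw [Matrix.charpoly_natDegree_eq_dim, Fintype.card_fin]
    omega
  have hq : (Polynomial.X - Polynomial.C M) * q
      = M.charpoly.map (algebraMap S (Matrix (Fin N) (Fin N) S)) := by
    rw [hqdef, Finset.mul_sum]
    have inner : ∀ t ∈ Finset.range (N + 1),
        (Polynomial.X - Polynomial.C M) * ∑ a ∈ Finset.range t,
          Polynomial.C (M.charpoly.coeff t • M ^ (t - 1 - a)) * Polynomial.X ^ a
        = Polynomial.C (M.charpoly.coeff t • (1 : Matrix (Fin N) (Fin N) S)) * Polynomial.X ^ t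
          - Polynomial.C (M.charpoly.coeff t • M ^ t) := by
      intro t _
      have step : ∀ a ∈ Finset.range t,
          (Polynomial.X - Polynomial.C M) * (Polynomial.C (M.charpoly.coeff t • M ^ (t - 1 - a)) * Polynomial.X ^ a)
          = Polynomial.C (M.charpoly.coeff t • M ^ (t - (a + 1))) * Polynomial.X ^ (a + 1)
            - Polynomial.C (M.charpoly.coeff t • M ^ (t - a)) * Polynomial.X ^ a := by
        intro a ha
        rw [Finset.mem_range] at ha
        have h1 : t - (a + 1) = t - 1 - a := by omega
        have h2 : t - a = t - 1 - a + 1 := by omega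
        rw [h1, h2, sub_mul, ← mul_assoc, X_mul, mul_assoc, ← pow_succ', ← mul_assoc,
          ← Polynomial.C_mul, Matrix.mul_smul, ← pow_succ']
      rw [Finset.mul_sum, Finset.sum_congr rfl step,
        Finset.sum_range_sub (fun a => Polynomial.C (M.charpoly.coeff t • M ^ (t - a)) * Polynomial.X ^ a)]
      simp
    rw [Finset.sum_congr rfl inner, Finset.sum_sub_distrib]
    have h2 : ∑ t ∈ Finset.range (N + 1), Polynomial.C (M.charpoly.coeff t • M ^ t)
        = Polynomial.C (aeval M M.charpoly) := by
      rw [aeval_eq_sum_range' hdeg, map_sum]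
    rw [h2, Matrix.aeval_self_charpoly, map_zero, sub_zero]
    conv_rhs => rw [M.charpoly.as_sum_range' (N + 1) hdeg]
    rw [Polynomial.map_sum]
    apply Finset.sum_congr rfl
    intro t _
    rw [Polynomial.map_monomial, ← Polynomial.C_mul_X_pow_eq_monomial,
      Algebra.algebraMap_eq_smul_one]
  have hG : (Polynomial.X - Polynomial.C M) * matPolyEquiv ((charmatrix M).adjugate)
      = M.charpoly.map (algebraMap S (Matrix (Fin N) (Fin N) S)) := by
    have h := Matrix.mul_adjugate (charmatrix M)
    apply_fun matPolyEquiv at h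
    rw [_root_.map_mul, matPolyEquiv_charmatrix] at h
    rw [h, matPolyEquiv_smul_one]
    rfl
  have hqG : matPolyEquiv ((charmatrix M).adjugate) = q :=
    (monic_X_sub_C M).isRegular.left (hG.trans hq.symm)
  have hcoeff : q.coeff m
      = ∑ t ∈ Finset.Ico (m + 1) (N + 1), M.charpoly.coeff t • M ^ (t - 1 - m) := by
    rw [hqdef]
    simp only [Polynomial.finset_sum_coeff, Polynomial.coeff_C_mul, Polynomial.coeff_X_pow,
      mul_ite, mul_one, mul_zero, Finset.sum_ite_eq (Finset.range _), Finset.mem_range]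
    rw [Finset.sum_ite, Finset.sum_const_zero, add_zero]
    apply Finset.sum_congr
    · ext t
      simp only [Finset.mem_filter, Finset.mem_range, Finset.mem_Ico]
      omega
    · intro t _
      rfl
  have h := matPolyEquiv_coeff_apply ((charmatrix M).adjugate) m i j
  rw [hqG, hcoeff] at h
  rw [← h]

end Aux

/-- For a nilpotent matrix `A`,
`(-1)^m (∂_{ji} s_{m+1})(A)_{ij} = A^m = (∂_{ji} h_{m+1})(A)_{ij}`. -/
theorem pderiv_sPoly_hPoly_nilpotent {k : Type*} [Field k] (n m : ℕ)
    (A : Matrix (Fin n) (Fin n) k) (hA : IsNilpotent A) :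
    ((-1 : k) ^ m) • (Matrix.of fun i j =>
        eval (fun p : Fin n × Fin n => A p.1 p.2) (pderiv (j, i) (sPoly k n (m + 1)))) = A ^ m ∧
    (Matrix.of fun i j =>
        eval (fun p : Fin n × Fin n => A p.1 p.2) (pderiv (j, i) (hPoly k n (m + 1)))) = A ^ m := by
  classical
  set φ : Fin n × Fin n → k := fun p => A p.1 p.2 with hφ
  have hcharA : A.charpoly = Polynomial.X ^ n := by
    have h1 := Matrix.isNilpotent_charpoly_sub_pow_of_isNilpotent hA
    have h2 := h1.eq_zero
    rw [sub_eq_zero] at h2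
    simpa [Fintype.card_fin] using h2
  have hAn : A ^ n = 0 := by
    have h := Matrix.aeval_self_charpoly A
    rw [hcharA] at h
    simpa using h
  have hmapA : (genMat k n).map (eval φ) = A := by
    ext i j
    simp [genMat, hφ]
  have hcoeffA : ∀ t : ℕ, eval φ ((genMat k n).charpoly.coeff t)
      = if t = n then 1 else 0 := by
    intro t
    have h := Matrix.charpoly_map (genMat k n) (MvPolynomial.eval φ)
    rw [hmapA, hcharA] at h
    have h2 := congrArg (fun q => Polynomial.coeff q t) h
    simpa [Polynomial.coeff_map, Polynomial.coeff_X_pow] using h2.symm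
  have hpowA : ∀ (e : ℕ) (i j : Fin n),
      eval φ (((genMat k n) ^ e) i j) = (A ^ e) i j := by
    intro e i j
    have h := map_pow (MvPolynomial.eval φ).mapMatrix (genMat k n) e
    rw [RingHom.mapMatrix_apply, RingHom.mapMatrix_apply, hmapA] at h
    rw [← h, Matrix.map_apply]
  have sKey : ∀ i j : Fin n,
      eval φ (pderiv (j, i) (sPoly k n (m + 1))) = (-1 : k) ^ m * (A ^ m) i j := by
    intro i j
    by_cases hmn : m + 1 ≤ n
    · rw [sPoly, if_pos hmn]
      have hconst : ((-1 : MvPolynomial (Fin n × Fin n) k)) ^ (m + 1)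
          = C ((-1 : k) ^ (m + 1)) := by
        rw [map_pow, map_neg, map_one]
      rw [hconst, pderiv_C_mul, map_mul, eval_C]
      rw [deriv_charpoly_coeff (pderiv (j, i)) (genMat k n) (n - (m + 1))]
      have hcollapse : (∑ c, ∑ r, ((Matrix.charmatrix (genMat k n)).adjugate c r).coeff
            (n - (m + 1)) * pderiv (j, i) (genMat k n r c))
          = ((Matrix.charmatrix (genMat k n)).adjugate i j).coeff (n - (m + 1)) := by
        have hX : ∀ r c : Fin n, pderiv (j, i) (genMat k n r c)
            = if r = j ∧ c = i then 1 else 0 := by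
          intro r c
          show pderiv (j, i) (X (r, c)) = _
          rw [pderiv_X, Pi.single_apply]
          congr 1
          simp [Prod.ext_iff, eq_comm, and_comm]
        simp only [hX, mul_ite, mul_one, mul_zero, ite_and]
        rw [Finset.sum_comm]
        simp
      rw [hcollapse]
      rw [adjugate_charmatrix_coeff]
      rw [Matrix.sum_apply]
      simp only [Matrix.smul_apply, smul_eq_mul]
      rw [map_neg, map_sum]
      simp only [map_mul, hcoeffA, hpowA, ite_mul, one_mul, zero_mul]
      rw [Finset.sum_ite_eq' (Finset.Ico (n - (m + 1) + 1) (n + 1)) n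
        (fun t => (A ^ (t - 1 - (n - (m + 1)))) i j)]
      rw [if_pos (by rw [Finset.mem_Ico]; omega)]
      have he : n - 1 - (n - (m + 1)) = m := by omega
      rw [he, pow_succ]
      ring
    · rw [sPoly, if_neg hmn, map_zero, map_zero]
      have : A ^ m = 0 := by
        have hnm : m = n + (m - n) := by omega
        rw [hnm, pow_add, hAn, zero_mul]
      rw [this]
      simp
  have hsval : ∀ r : ℕ, eval φ (sPoly k n (r + 1)) = 0 := by
    intro r
    rw [sPoly]
    split_ifs with h
    · rw [map_mul, hcoeffA, if_neg (by omega)]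
      simp
    · simp
  have hhval : ∀ r : ℕ, eval φ (hPoly k n (r + 1)) = 0 := by
    intro r
    rw [hPoly, map_sum]
    refine Finset.sum_eq_zero fun a _ => ?_
    rw [map_mul, map_mul, hsval]
    ring
  constructor
  · ext i j
    rw [Matrix.smul_apply, Matrix.of_apply, sKey, smul_eq_mul, ← mul_assoc, ← mul_pow]
    simp
  · ext i j
    rw [Matrix.of_apply]
    have hunfold : hPoly k n (m + 1)
        = ∑ a ∈ Finset.range (m + 1), (-1) ^ a * sPoly k n (a + 1) * hPoly k n (m - a) := by
      rw [hPoly]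
    rw [hunfold, map_sum, map_sum]
    rw [Finset.sum_eq_single m]
    · rw [Nat.sub_self]
      have h0 : hPoly k n 0 = 1 := by rw [hPoly]
      rw [h0, mul_one]
      have hconst : ((-1 : MvPolynomial (Fin n × Fin n) k)) ^ m = C ((-1 : k) ^ m) := by
        rw [map_pow, map_neg, map_one]
      rw [hconst, pderiv_C_mul, map_mul, eval_C, sKey, ← mul_assoc, ← mul_pow]
      simp
    · intro a ha hne
      have ha' : a < m := by
        rw [Finset.mem_range] at ha
        omega
      have hma : m - a = (m - a - 1) + 1 := by omega
      rw [hma]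
      simp [pderiv_mul, hsval, hhval]
    · intro h
      exact absurd (Finset.self_mem_range_succ m) h
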